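/- Fix s ∈ [d], a vector w* ∈ [-1/√s, 1/√s]ᵈ with at most s nonzero coordinates, and ε, δ > 0. Let w⁽¹⁾,…,w⁽ᵏ⁾ ∈ ℝᵈ be i.i.d. uniform on [-1,1]ᵈ and u ∈ [-1,1]ᵏ uniform on [-1,1]ᵏ. If k ≥ s·⌈(16s²/ε²)·log(2s/δ)⌉, then with probability at least 1-δ there exist binary masks b⁽¹⁾,…,b⁽ᵏ⁾ ∈ {0,1}ᵈ such that g(x) = Σᵢ uᵢ σ(⟨w⁽ⁱ⁾ ⊙ b⁽ⁱ⁾, x⟩) satisfies |g(x) - ⟨w*, x⟩| ≤ ε for all x with ‖x‖_∞ ≤ 1; moreover Σᵢ ‖b⁽ⁱ⁾‖₀ ≤ 2s and each b⁽ⁱ⁾ has at most one nonzero entry. -/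

import Mathlib

open MeasureTheory ProbabilityTheory Real
open scoped Classical

noncomputable def relu (t : ℝ) : ℝ := max t 0

noncomputable def unif {α : Type*} [MeasureSpace α] (s : Set α) : Measure α :=
  (volume s)⁻¹ • volume.restrict s

noncomputable def l0 {d : ℕ} (b : Fin d → ℝ) : ℕ :=
  (Finset.univ.filter (fun t => b t ≠ 0)).card

section Helpers

lemma unif_univ : unif (Set.Icc (-1:ℝ) 1) Set.univ = 1 := by
  simp only [unif, Measure.smul_apply, smul_eq_mul, Measure.restrict_apply_univ,
    Real.volume_Icc]
  rw [ENNReal.inv_mul_cancel] <;> simp [ENNReal.ofReal_ne_top]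

lemma unif_Icc (c e : ℝ) (hc : -1 ≤ c) (he : e ≤ 1) :
    unif (Set.Icc (-1:ℝ) 1) (Set.Icc c e) = ENNReal.ofReal ((e - c)/2) := by
  simp only [unif, Measure.smul_apply, smul_eq_mul,
    Measure.restrict_apply measurableSet_Icc, Set.Icc_inter_Icc, Real.volume_Icc]
  rw [sup_eq_left.2 hc, inf_eq_left.2 he]
  rw [div_eq_mul_inv, ENNReal.ofReal_mul' (by norm_num), mul_comm]
  congr 1
  rw [show ((2:ℝ)⁻¹) = (2:ℝ)⁻¹ from rfl, ← ENNReal.ofReal_inv_of_pos (by norm_num)]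
  norm_num

lemma aemeasurable_of_map_unif {Ω : Type*} [MeasurableSpace Ω] (μ : Measure Ω) (f : Ω → ℝ)
    (h : μ.map f = unif (Set.Icc (-1:ℝ) 1)) : AEMeasurable f μ := by
  by_contra hn
  have := Measure.map_of_not_aemeasurable hn
  rw [this] at h
  have h2 := congrArg (fun ν : Measure ℝ => ν Set.univ) h
  simp [unif_univ] at h2

lemma relu_nonneg (x : ℝ) : 0 ≤ relu x := le_max_right _ _

lemma relu_pos_mul (w x : ℝ) (hw : 0 ≤ w) : relu (w * x) = w * relu x := by
  unfold relu
  rw [mul_max_of_nonneg _ _ hw, mul_zero]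

lemma relu_sub (x : ℝ) : relu x - relu (-x) = x := by
  rcases le_total 0 x with h | h <;>
    simp [relu, max_eq_left, max_eq_right, neg_nonpos.2, h, neg_nonneg.2]

lemma relu_add (x : ℝ) : relu x + relu (-x) = |x| := by
  rcases le_total 0 x with h | h <;>
    · rw [abs_eq_max_neg]
      simp [relu, max_eq_left, max_eq_right, neg_nonpos.2, h, neg_nonneg.2]

lemma coord_approx (a ε' x wP wM uP uM : ℝ)
    (hε0 : 0 < ε') (hε1 : ε' ≤ 1) (ha : |a| ≤ 1) (hx : |x| ≤ 1)
    (hwp : wP ∈ Set.Icc (max |a| ε' * (1 - ε'/2)) (max |a| ε'))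
    (hwm : wM ∈ Set.Icc (-(max |a| ε')) (-(max |a| ε' * (1 - ε'/2))))
    (hup : uP ∈ (if 0 ≤ a then Set.Icc ((max |a| ε' - ε')/(max |a| ε' * (1 - ε'/2))) 1
        else Set.Icc (-1) (-((max |a| ε' - ε')/(max |a| ε' * (1 - ε'/2))))))
    (hum : uM ∈ (if 0 ≤ a then Set.Icc (-1) (-((max |a| ε' - ε')/(max |a| ε' * (1 - ε'/2))))
        else Set.Icc ((max |a| ε' - ε')/(max |a| ε' * (1 - ε'/2))) 1)) :
    |uP * relu (wP * x) + uM * relu (wM * x) - a * x| ≤ ε' := by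
  set m := max |a| ε' with hm
  set D := m * (1 - ε'/2) with hDdef
  set u₁ := (m - ε')/D with hu₁def
  have hm1 : ε' ≤ m := le_max_right _ _
  have hm2 : |a| ≤ m := le_max_left _ _
  have hm3 : m ≤ |a| + ε' := max_le (by linarith) (by linarith [abs_nonneg a])
  have hm4 : m ≤ 1 := max_le ha hε1
  have hm0 : 0 < m := lt_of_lt_of_le hε0 hm1
  have hD : 0 < D := by
    apply mul_pos hm0; linarith
  have hu₁D : u₁ * D = m - ε' := div_mul_cancel₀ _ (ne_of_gt hD)
  have hu₁0 : 0 ≤ u₁ := div_nonneg (by linarith) (le_of_lt hD)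
  have key : ∀ w u' : ℝ, w ∈ Set.Icc D m → u' ∈ Set.Icc u₁ 1 →
      m - ε' ≤ u' * w ∧ u' * w ≤ m := by
    rintro w u' ⟨hw1, hw2⟩ ⟨hu1, hu2⟩
    constructor
    · calc m - ε' = u₁ * D := hu₁D.symm
        _ ≤ u' * w := mul_le_mul hu1 hw1 (le_of_lt hD) (le_trans hu₁0 hu1)
    · calc u' * w ≤ 1 * m :=
            mul_le_mul hu2 hw2 (le_trans (le_of_lt hD) hw1) zero_le_one
        _ = m := one_mul m
  have hcp : |uP * wP - a| ≤ ε' ∧ |uM * wM - a| ≤ ε' := by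
    by_cases h0 : 0 ≤ a
    · rw [if_pos h0] at hup hum
      have h1 := key wP uP hwp hup
      have h2 : uM * wM = (-uM) * (-wM) := by ring
      have h3 := key (-wM) (-uM) ⟨by linarith [hwm.2], by linarith [hwm.1]⟩
        ⟨by linarith [hum.2], by linarith [hum.1]⟩
      rw [abs_of_nonneg h0] at hm2 hm3
      constructor <;> rw [abs_le] <;> constructor <;>
        first
          | linarith [h1.1, h1.2]
          | (rw [h2]; linarith [h3.1, h3.2])
    · rw [if_neg h0] at hup hum
      push_neg at h0
      have h1 : uP * wP = -((-uP) * wP) := by ring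
      have h2 : uM * wM = -(uM * (-wM)) := by ring
      have h3 := key wP (-uP) hwp ⟨by linarith [hup.2], by linarith [hup.1]⟩
      have h4 := key (-wM) uM ⟨by linarith [hwm.2], by linarith [hwm.1]⟩ hum
      rw [abs_of_neg h0] at hm2 hm3
      constructor <;> rw [abs_le] <;> constructor <;>
        first
          | (rw [h1]; linarith [h3.1, h3.2])
          | (rw [h2]; linarith [h4.1, h4.2])
  have hwppos : 0 ≤ wP := le_trans (le_of_lt hD) hwp.1
  have hwmneg : 0 ≤ -wM := by have := hwm.2; linarith
  have e1 : relu (wP * x) = wP * relu x := relu_pos_mul _ _ hwppos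
  have e2 : relu (wM * x) = (-wM) * relu (-x) := by
    rw [show wM * x = (-wM) * (-x) by ring, relu_pos_mul _ _ hwmneg]
  rw [e1, e2]
  have h5 := relu_sub x
  have h6 := relu_add x
  have h7 := relu_nonneg x
  have h8 := relu_nonneg (-x)
  have h9 := hcp.1
  have h10 := hcp.2
  rw [abs_le] at h9 h10 ⊢
  have k5 : relu x + relu (-x) ≤ 1 := by rw [h6]; exact hx
  have k6 : ε' * (relu x + relu (-x)) ≤ ε' * 1 :=
    mul_le_mul_of_nonneg_left k5 (le_of_lt hε0)
  have k7 : a * (relu x - relu (-x)) = a * x := by rw [h5]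
  constructor <;>
    nlinarith [k7, mul_le_mul_of_nonneg_right h9.1 h7, mul_le_mul_of_nonneg_right h9.2 h7,
      mul_le_mul_of_nonneg_right h10.1 h8, mul_le_mul_of_nonneg_right h10.2 h8, k6]

lemma indep_pairs_bound {Ω : Type*} [MeasurableSpace Ω] (μ : Measure Ω)
    {ι : Type*} (f : ι → Ω → ℝ)
    (hindep : iIndepFun f μ)
    {n : ℕ} (g h : Fin n → ι) (hgh : ∀ r r', g r ≠ h r') (hg : Function.Injective g)
    (hh : Function.Injective h)
    (A B : Set ℝ) (hA : MeasurableSet A) (hB : MeasurableSet B)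
    (pa qa qb : ENNReal)
    (hpa : ∀ r, μ (f (g r) ⁻¹' A) = pa) (hqa : ∀ r, μ (f (g r) ⁻¹' Aᶜ) = qa)
    (hqb : ∀ r, μ (f (h r) ⁻¹' Bᶜ) = qb) :
    μ (⋂ r : Fin n, (f (g r) ⁻¹' A ∩ f (h r) ⁻¹' B)ᶜ) ≤ (pa * qb + qa) ^ n := by
  classical
  set sets : Finset (Fin n) → ι → Set ℝ := fun T' j =>
    if ∃ r ∈ T', g r = j then A else if ∃ r : Fin n, g r = j then Aᶜ else Bᶜ with hsets
  set P : Finset (Fin n) → Set Ω := fun T' =>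
    ⋂ j ∈ (Finset.univ.image g ∪ T'.image h), f j ⁻¹' (sets T' j) with hP
  have hsets_g : ∀ (T' : Finset (Fin n)) (r : Fin n),
      sets T' (g r) = if r ∈ T' then A else Aᶜ := by
    intro T' r
    simp only [hsets]
    by_cases hr : r ∈ T'
    · rw [if_pos ⟨r, hr, rfl⟩, if_pos hr]
    · rw [if_neg, if_pos ⟨r, rfl⟩, if_neg hr]
      rintro ⟨r', hr', heq⟩
      exact hr ((hg heq) ▸ hr')
  have hsets_h : ∀ (T' : Finset (Fin n)) (r : Fin n), sets T' (h r) = Bᶜ := by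
    intro T' r
    simp only [hsets]
    rw [if_neg, if_neg]
    · rintro ⟨r', heq⟩; exact hgh r' r heq
    · rintro ⟨r', _, heq⟩; exact hgh r' r heq
  have step1 : (⋂ r : Fin n, (f (g r) ⁻¹' A ∩ f (h r) ⁻¹' B)ᶜ) ⊆
      ⋃ T' ∈ (Finset.univ : Finset (Fin n)).powerset, P T' := by
    intro ω hω
    rw [Set.mem_iInter] at hω
    refine Set.mem_iUnion₂.2 ⟨Finset.univ.filter (fun r => f (g r) ω ∈ A),
      Finset.mem_powerset.2 (Finset.subset_univ _), ?_⟩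
    simp only [hP]
    refine Set.mem_iInter₂.2 ?_
    intro j hj
    rcases Finset.mem_union.1 hj with hj | hj
    · obtain ⟨r, -, rfl⟩ := Finset.mem_image.1 hj
      rw [Set.mem_preimage, hsets_g]
      by_cases hr : f (g r) ω ∈ A
      · rw [if_pos (by simp [hr])]; exact hr
      · rw [if_neg (by simp [hr])]; exact hr
    · obtain ⟨r, hrT, rfl⟩ := Finset.mem_image.1 hj
      rw [Set.mem_preimage, hsets_h]
      have h1 : f (g r) ω ∈ A := by
        simpa using (Finset.mem_filter.1 hrT).2
      have h2 := hω r
      rw [Set.mem_compl_iff, Set.mem_inter_iff] at h2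
      intro hb
      exact h2 ⟨h1, hb⟩
  have step3 : ∀ T' : Finset (Fin n),
      μ (P T') = (∏ _r ∈ T', (pa * qb)) * ∏ _r ∈ Finset.univ \ T', qa := by
    intro T'
    have hdisj : Disjoint (Finset.univ.image g) (T'.image h) := by
      rw [Finset.disjoint_left]
      rintro j hj1 hj2
      obtain ⟨r, -, rfl⟩ := Finset.mem_image.1 hj1
      obtain ⟨r', -, heq⟩ := Finset.mem_image.1 hj2
      exact hgh r r' heq.symm
    have hmeas : ∀ j ∈ (Finset.univ.image g ∪ T'.image h),
        MeasurableSet (sets T' j) := by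
      intro j _
      simp only [hsets]
      split
      · exact hA
      · split
        · exact hA.compl
        · exact hB.compl
    simp only [hP]
    rw [hindep.measure_inter_preimage_eq_mul _ hmeas]
    rw [Finset.prod_union hdisj]
    rw [Finset.prod_image (fun a _ b _ hab => hg hab),
      Finset.prod_image (fun a _ b _ hab => hh hab)]
    have e1 : ∀ r : Fin n, μ (f (g r) ⁻¹' sets T' (g r))
        = if r ∈ T' then pa else qa := by
      intro r
      rw [hsets_g]
      by_cases hr : r ∈ T'
      · rw [if_pos hr, if_pos hr, hpa]
      · rw [if_neg hr, if_neg hr, hqa]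
    have e2 : ∀ r : Fin n, μ (f (h r) ⁻¹' sets T' (h r)) = qb := by
      intro r; rw [hsets_h, hqb]
    rw [Finset.prod_congr rfl (fun r _ => e1 r), Finset.prod_congr rfl (fun r _ => e2 r)]
    rw [show (fun r : Fin n => if r ∈ T' then pa else qa)
        = T'.piecewise (fun _ => pa) (fun _ => qa) from rfl]
    rw [Finset.prod_piecewise]
    rw [Finset.univ_inter, Finset.prod_const, Finset.prod_const, Finset.prod_const,
      Finset.prod_const]
    ring
  calc μ (⋂ r : Fin n, (f (g r) ⁻¹' A ∩ f (h r) ⁻¹' B)ᶜ)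
      ≤ μ (⋃ T' ∈ (Finset.univ : Finset (Fin n)).powerset, P T') := measure_mono step1
    _ ≤ ∑ T' ∈ (Finset.univ : Finset (Fin n)).powerset, μ (P T') :=
        measure_biUnion_finset_le _ _
    _ = ∑ T' ∈ (Finset.univ : Finset (Fin n)).powerset,
        (∏ _r ∈ T', (pa * qb)) * ∏ _r ∈ Finset.univ \ T', qa :=
        Finset.sum_congr rfl (fun T' _ => step3 T')
    _ = ∏ _r ∈ (Finset.univ : Finset (Fin n)), (pa * qb + qa) :=
        (Finset.prod_add _ _ _).symm
    _ = (pa * qb + qa) ^ n := by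
        rw [Finset.prod_const, Finset.card_univ, Fintype.card_fin]

end Helpers

set_option maxHeartbeats 2000000 in
/-- an `s`-sparse linear function `x ↦ ⟨w*, x⟩` can be approximated,
with probability at least `1-δ`, by pruning a random two-layer ReLU network with
i.i.d. uniform weights, when `k ≥ s·⌈(16s²/ε²)·log(2s/δ)⌉`, using at most `2s`
active weights overall and at most one per neuron. -/
theorem sparse_linear_by_pruning
    (d k s : ℕ) (hd : 0 < d) (hs1 : 1 ≤ s) (hsd : s ≤ d)
    (wstar : Fin d → ℝ) (hwstar : ∀ t, |wstar t| ≤ 1 / Real.sqrt s)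
    (hsparse : l0 wstar ≤ s)
    (ε δ : ℝ) (hε : 0 < ε) (hδ : 0 < δ)
    {Ω : Type*} [MeasurableSpace Ω] (μ : Measure Ω) [IsProbabilityMeasure μ]
    (W : Fin k → Ω → (Fin d → ℝ)) (u : Ω → (Fin k → ℝ))
    (hindep : iIndepFun
      (Sum.elim (fun p : Fin k × Fin d => fun ω => W p.1 ω p.2)
        (fun j : Fin k => fun ω => u ω j)) μ)
    (hWdist : ∀ (j : Fin k) (t : Fin d),
      μ.map (fun ω => W j ω t) = unif (Set.Icc (-1 : ℝ) 1))
    (hudist : ∀ j : Fin k, μ.map (fun ω => u ω j) = unif (Set.Icc (-1 : ℝ) 1))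
    (hk : (s : ℝ) * ⌈16 * (s : ℝ) ^ 2 / ε ^ 2 * Real.log (2 * s / δ)⌉₊ ≤ (k : ℝ)) :
    ENNReal.ofReal (1 - δ) ≤ μ {ω | ∃ b : Fin k → Fin d → ℝ,
      (∀ j t, b j t = 0 ∨ b j t = 1) ∧
      (∀ x : Fin d → ℝ, (∀ t, |x t| ≤ 1) →
        |(∑ j, u ω j * relu (∑ t, W j ω t * b j t * x t)) - ∑ t, wstar t * x t| ≤ ε) ∧
      (∑ j, l0 (b j)) ≤ 2 * s ∧ (∀ j, l0 (b j) ≤ 1)} := by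
  classical
  rcases le_or_gt 1 δ with hδ1 | hδ1
  · rw [show ENNReal.ofReal (1 - δ) = 0 from ENNReal.ofReal_eq_zero.2 (by linarith)]
    exact zero_le
  have hs0 : (0:ℝ) < s := by exact_mod_cast hs1
  have hsq1 : 1 ≤ Real.sqrt s := by
    rw [show (1:ℝ) = Real.sqrt 1 by simp]
    exact Real.sqrt_le_sqrt (by exact_mod_cast hs1)
  have hsq0 : 0 < Real.sqrt s := by linarith
  have hwa1 : ∀ t, |wstar t| ≤ 1 := fun t => le_trans (hwstar t)
    (by rw [div_le_one hsq0]; exact hsq1)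
  rcases le_or_gt (Real.sqrt s) ε with hεbig | hεbig
  · -- trivial: zero masks work
    have hwsum : ∀ x : Fin d → ℝ, (∀ t, |x t| ≤ 1) → |∑ t, wstar t * x t| ≤ ε := by
      intro x hx
      calc |∑ t, wstar t * x t| ≤ ∑ t, |wstar t * x t| := Finset.abs_sum_le_sum_abs _ _
        _ ≤ ∑ t, |wstar t| := by
            refine Finset.sum_le_sum fun t _ => ?_
            rw [abs_mul]
            exact mul_le_of_le_one_right (abs_nonneg _) (hx t)
        _ = ∑ t ∈ Finset.univ.filter (fun t => wstar t ≠ 0), |wstar t| :=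
            (Finset.sum_filter_of_ne (fun t _ h => by
              intro h0; exact h (by rw [h0, abs_zero]))).symm
        _ ≤ (Finset.univ.filter (fun t : Fin d => wstar t ≠ 0)).card • (1/Real.sqrt s) :=
            Finset.sum_le_card_nsmul _ _ _ (fun t _ => hwstar t)
        _ ≤ (s:ℝ) * (1/Real.sqrt s) := by
            rw [nsmul_eq_mul]
            apply mul_le_mul_of_nonneg_right _ (by positivity)
            exact_mod_cast hsparse
        _ = Real.sqrt s := by
            rw [mul_one_div, Real.div_sqrt]
        _ ≤ ε := hεbig
    have huniv : {ω : Ω | ∃ b : Fin k → Fin d → ℝ,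
        (∀ j t, b j t = 0 ∨ b j t = 1) ∧
        (∀ x : Fin d → ℝ, (∀ t, |x t| ≤ 1) →
          |(∑ j, u ω j * relu (∑ t, W j ω t * b j t * x t)) - ∑ t, wstar t * x t| ≤ ε) ∧
        (∑ j, l0 (b j)) ≤ 2 * s ∧ (∀ j, l0 (b j) ≤ 1)} = Set.univ := by
      ext ω
      simp only [Set.mem_setOf_eq, Set.mem_univ, iff_true]
      refine ⟨fun _ _ => 0, fun j t => Or.inl rfl, ?_, ?_, ?_⟩
      · intro x hx
        have hz : ∀ j : Fin k, u ω j * relu (∑ t, W j ω t * (0:ℝ) * x t) = 0 := by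
          intro j; simp [relu]
        rw [Finset.sum_congr rfl (fun j _ => hz j), Finset.sum_const, smul_zero, zero_sub,
          abs_neg]
        exact hwsum x hx
      · have h0 : (l0 (fun _ : Fin d => (0:ℝ))) = 0 := by simp [l0]
        calc (∑ _j : Fin k, l0 (fun _ : Fin d => (0:ℝ))) = ∑ _j : Fin k, 0 :=
              Finset.sum_congr rfl (fun j _ => h0)
          _ = 0 := Finset.sum_const_zero
          _ ≤ 2 * s := Nat.zero_le _
      · intro j; simp [l0]
    rw [huniv, measure_univ]
    exact ENNReal.ofReal_le_one.2 (by linarith)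
  -- MAIN CASE
  have hε'0 : 0 < ε / s := div_pos hε hs0
  have hssqrt : Real.sqrt s ≤ s := by
    nlinarith [Real.sq_sqrt hs0.le, Real.sqrt_nonneg (s:ℝ)]
  have hε'1 : ε / s ≤ 1 := by rw [div_le_one hs0]; linarith
  set ε' := ε / s with hε'def
  have hL0 : 0 < Real.log (2*(s:ℝ)/δ) := Real.log_pos (by
    rw [lt_div_iff₀ hδ]; nlinarith)
  set L := Real.log (2*(s:ℝ)/δ) with hLdef
  set n := ⌈16 * (s:ℝ)^2 / ε^2 * L⌉₊ with hndef
  have hn0 : 0 < n := Nat.ceil_pos.2 (by positivity)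
  have hkn : s * n ≤ k := by exact_mod_cast hk
  have hk0 : 0 < k := lt_of_lt_of_le (Nat.mul_pos hs1 hn0) hkn
  set T := Finset.univ.filter (fun t : Fin d => wstar t ≠ 0) with hTdef
  have hTcard : T.card ≤ s := hsparse
  -- enumeration of T and assignment of neurons
  set eT := T.equivFin with heT
  set nt : Fin d → ℕ := fun t => if h : t ∈ T then (eT ⟨t, h⟩ : ℕ) else 0 with hnt
  have hnts : ∀ t, nt t < s := by
    intro t
    simp only [hnt]
    split
    · exact lt_of_lt_of_le (Fin.is_lt _) hTcard
    · omega
  have hntinj : ∀ t ∈ T, ∀ t' ∈ T, nt t = nt t' → t = t' := by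
    intro t ht t' ht' h
    simp only [hnt, dif_pos ht, dif_pos ht'] at h
    have h2 : eT ⟨t, ht⟩ = eT ⟨t', ht'⟩ := Fin.ext h
    have h3 := eT.injective h2
    exact congrArg Subtype.val h3
  have hlt : ∀ (t : Fin d) (r : Fin n), nt t * n + r.1 < k := by
    intro t r
    have h1 : (nt t + 1) * n = nt t * n + n := by ring
    have h2 : (nt t + 1) * n ≤ s * n := Nat.mul_le_mul_right n (hnts t)
    have h3 := r.isLt
    omega
  set ii : Fin d → Fin n → Fin k := fun t r => ⟨nt t * n + r.1, hlt t r⟩ with hii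
  have hii_r : ∀ t, Function.Injective (ii t) := by
    intro t r r' h
    have h2 := congrArg Fin.val h
    simp only [hii] at h2
    exact Fin.ext (by omega)
  have haux : ∀ a b r r' : ℕ, r < n → r' < n → a * n + r = b * n + r' → a = b := by
    intro a b r r' hr hr' heq
    have h1 : (a * n + r) / n = a := by
      rw [Nat.mul_comm a n, Nat.mul_add_div hn0, Nat.div_eq_of_lt hr, Nat.add_zero]
    have h2 : (b * n + r') / n = b := by
      rw [Nat.mul_comm b n, Nat.mul_add_div hn0, Nat.div_eq_of_lt hr', Nat.add_zero]
    rw [← h1, ← h2, heq]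
  have hii_t : ∀ t ∈ T, ∀ t' ∈ T, ∀ (r r' : Fin n), ii t r = ii t' r' → t = t' := by
    intro t ht t' ht' r r' h
    have hv := congrArg Fin.val h
    simp only [hii] at hv
    exact hntinj t ht t' ht' (haux _ _ _ _ r.isLt r'.isLt hv)
  -- coordinate quantities
  set mf : Fin d → ℝ := fun t => max |wstar t| ε' with hmf
  set Df : Fin d → ℝ := fun t => mf t * (1 - ε'/2) with hDf
  set u1f : Fin d → ℝ := fun t => (mf t - ε')/(Df t) with hu1f
  have hm0 : ∀ t, 0 < mf t := fun t => lt_of_lt_of_le hε'0 (le_max_right _ _)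
  have hm1 : ∀ t, ε' ≤ mf t := fun t => le_max_right _ _
  have hm4 : ∀ t, mf t ≤ 1 := fun t => max_le (hwa1 t) hε'1
  have hDf_eq : ∀ t, Df t = mf t * (1 - ε'/2) := fun t => by rw [hDf]
  have hD0 : ∀ t, 0 < Df t := fun t => by
    rw [hDf_eq]; apply mul_pos (hm0 t); linarith
  have hDlt : ∀ t, Df t ≤ mf t := fun t => by
    rw [hDf_eq]; nlinarith [hm0 t, hε'0]
  have hu1f_eq : ∀ t, u1f t = (mf t - ε')/(Df t) := fun t => by rw [hu1f]
  have hu10 : ∀ t, 0 ≤ u1f t := fun t => by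
    rw [hu1f_eq]; exact div_nonneg (by linarith [hm1 t]) (hD0 t).le
  have hu1D : ∀ t, u1f t * Df t = mf t - ε' := fun t => by
    rw [hu1f_eq]; exact div_mul_cancel₀ _ (hD0 t).ne'
  have hu11 : ∀ t, u1f t ≤ 1 := by
    intro t
    rw [hu1f_eq, div_le_one (hD0 t), hDf_eq]
    nlinarith [hm4 t, hε'0, hm0 t]
  set α : Fin d → ℝ := fun t => mf t * ε'/4 with hα
  set β : Fin d → ℝ := fun t => (1 - u1f t)/2 with hβ
  have hα_eq : ∀ t, α t = mf t * ε'/4 := fun t => by rw [hα]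
  have hβ_eq : ∀ t, β t = (1 - u1f t)/2 := fun t => by rw [hβ]
  have hα0 : ∀ t, 0 ≤ α t := fun t => by rw [hα_eq]; positivity
  have hα1 : ∀ t, α t ≤ 1 := fun t => by
    rw [hα_eq]; nlinarith [hm4 t, hε'1, hm0 t, hε'0]
  have hβ0 : ∀ t, 0 ≤ β t := fun t => by rw [hβ_eq]; linarith [hu11 t]
  have hβ1 : ∀ t, β t ≤ 1 := fun t => by rw [hβ_eq]; linarith [hu10 t]
  have hαβ : ∀ t, ε'^2/16 ≤ α t * β t := by
    intro t
    have e1 : (1 - u1f t) * Df t = Df t - (mf t - ε') := by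
      rw [sub_mul, one_mul, hu1D t]
    have e2 : Df t = mf t * (1 - ε'/2) := hDf_eq t
    have e3 : ε'/2 ≤ mf t * (1 - u1f t) := by
      have e4 : (1 - u1f t) * Df t ≤ (1 - u1f t) * mf t :=
        mul_le_mul_of_nonneg_left (hDlt t) (by linarith [hu11 t])
      have e5 : mf t * ε' ≤ ε' := mul_le_of_le_one_left hε'0.le (hm4 t)
      linarith [e1, e2, e4, e5]
    rw [hα_eq, hβ_eq]
    linarith [mul_le_mul_of_nonneg_left e3 (le_of_lt hε'0)]
  -- interval sets
  set Bp : Fin d → Set ℝ := fun t => Set.Icc (u1f t) 1 with hBp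
  set Bm : Fin d → Set ℝ := fun t => Set.Icc (-1) (-(u1f t)) with hBm
  set AS : Fin d → Bool → Set ℝ := fun t ς =>
    if ς then Set.Icc (Df t) (mf t) else Set.Icc (-(mf t)) (-(Df t)) with hAS
  set BS : Fin d → Bool → Set ℝ := fun t ς =>
    if 0 ≤ wstar t then (if ς then Bp t else Bm t)
    else (if ς then Bm t else Bp t) with hBS
  have hASm : ∀ t ς, MeasurableSet (AS t ς) := by
    intro t ς; simp only [hAS]; split <;> exact measurableSet_Icc
  have hBSm : ∀ t ς, MeasurableSet (BS t ς) := by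
    intro t ς; simp only [hBS, hBp, hBm]
    split <;> split <;> exact measurableSet_Icc
  -- probabilities
  have hprob : ∀ (X : Ω → ℝ), μ.map X = unif (Set.Icc (-1:ℝ) 1) → ∀ c e : ℝ,
      -1 ≤ c → e ≤ 1 → c ≤ e →
      μ (X ⁻¹' Set.Icc c e) = ENNReal.ofReal ((e - c)/2) ∧
      μ (X ⁻¹' (Set.Icc c e)ᶜ) = ENNReal.ofReal (1 - (e - c)/2) := by
    intro X hX c e hc he hce
    have hae := aemeasurable_of_map_unif μ X hX
    have h1 : μ (X ⁻¹' Set.Icc c e) = ENNReal.ofReal ((e - c)/2) := by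
      rw [← Measure.map_apply_of_aemeasurable hae measurableSet_Icc, hX,
        unif_Icc c e hc he]
    refine ⟨h1, ?_⟩
    rw [← Measure.map_apply_of_aemeasurable hae measurableSet_Icc.compl, hX,
      measure_compl measurableSet_Icc (by rw [unif_Icc c e hc he]; exact ENNReal.ofReal_ne_top),
      unif_univ, unif_Icc c e hc he, ← ENNReal.ofReal_one,
      ← ENNReal.ofReal_sub _ (by linarith)]
  have hPA : ∀ (t : Fin d) (ς : Bool) (j : Fin k),
      μ ((fun ω => W j ω t) ⁻¹' (AS t ς)) = ENNReal.ofReal (α t) ∧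
      μ ((fun ω => W j ω t) ⁻¹' (AS t ς)ᶜ) = ENNReal.ofReal (1 - α t) := by
    intro t ς j
    have hαval : (mf t - Df t)/2 = α t := by
      rw [hα_eq, hDf_eq]; ring
    cases ς
    · have h := hprob _ (hWdist j t) (-(mf t)) (-(Df t))
        (by linarith [hm4 t]) (by linarith [hD0 t]) (by linarith [hDlt t])
      have hAeq : AS t false = Set.Icc (-(mf t)) (-(Df t)) := by simp [hAS]
      rw [hAeq]
      rw [show (-(Df t) - -(mf t))/2 = α t by rw [← hαval]; ring] at h
      exact h
    · have h := hprob _ (hWdist j t) (Df t) (mf t)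
        (by linarith [hD0 t]) (hm4 t) (hDlt t)
      have hAeq : AS t true = Set.Icc (Df t) (mf t) := by simp [hAS]
      rw [hAeq]
      rw [show (mf t - Df t)/2 = α t from hαval] at h
      exact h
  have hPB : ∀ (t : Fin d) (ς : Bool) (j : Fin k),
      μ ((fun ω => u ω j) ⁻¹' (BS t ς)ᶜ) = ENNReal.ofReal (1 - β t) := by
    intro t ς j
    have hβval : (1 - u1f t)/2 = β t := (hβ_eq t).symm
    have hBP : μ ((fun ω => u ω j) ⁻¹' (Bp t)ᶜ) = ENNReal.ofReal (1 - β t) := by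
      have h := hprob _ (hudist j) (u1f t) 1 (by linarith [hu10 t]) le_rfl (hu11 t)
      have : Bp t = Set.Icc (u1f t) 1 := by rw [hBp]
      rw [this]
      rw [show (1 - u1f t)/2 = β t from hβval] at h
      exact h.2
    have hBM : μ ((fun ω => u ω j) ⁻¹' (Bm t)ᶜ) = ENNReal.ofReal (1 - β t) := by
      have h := hprob _ (hudist j) (-1) (-(u1f t)) le_rfl (by linarith [hu10 t])
        (by linarith [hu11 t])
      have : Bm t = Set.Icc (-1) (-(u1f t)) := by rw [hBm]
      rw [this]
      rw [show (-(u1f t) - -1)/2 = β t by rw [← hβval]; ring] at h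
      exact h.2
    simp only [hBS]
    split <;> split <;> first | exact hBP | exact hBM
  -- the events
  set E : Fin d → Bool → Fin n → Set Ω := fun t ς r =>
    (fun ω => W (ii t r) ω t) ⁻¹' (AS t ς) ∩ (fun ω => u ω (ii t r)) ⁻¹' (BS t ς)
    with hE
  set G : Set Ω := ⋂ t ∈ T, ⋂ ς : Bool, ⋃ r : Fin n, E t ς r with hG
  -- MAIN BOUND
  have main_bound : ∀ t ∈ T, ∀ ς : Bool,
      μ (⋂ r : Fin n, (E t ς r)ᶜ) ≤ ENNReal.ofReal (δ/(2*s)) := by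
    intro t _ ς
    have hb := indep_pairs_bound μ
      (Sum.elim (fun p : Fin k × Fin d => fun ω => W p.1 ω p.2)
        (fun j : Fin k => fun ω => u ω j)) hindep
      (fun r => Sum.inl (ii t r, t)) (fun r => Sum.inr (ii t r))
      (fun r r' => by simp)
      (fun r r' hgg => by
        simp only [Sum.inl.injEq, Prod.mk.injEq] at hgg
        exact hii_r t hgg.1)
      (fun r r' hgg => by
        simp only [Sum.inr.injEq] at hgg
        exact hii_r t hgg)
      (AS t ς) (BS t ς) (hASm t ς) (hBSm t ς)
      (ENNReal.ofReal (α t)) (ENNReal.ofReal (1 - α t)) (ENNReal.ofReal (1 - β t))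
      (fun r => (hPA t ς (ii t r)).1) (fun r => (hPA t ς (ii t r)).2)
      (fun r => hPB t ς (ii t r))
    simp only [Sum.elim_inl, Sum.elim_inr] at hb
    rw [show (⋂ r : Fin n, (E t ς r)ᶜ) = ⋂ r : Fin n,
      ((fun ω => W (ii t r) ω t) ⁻¹' (AS t ς) ∩ (fun ω => u ω (ii t r)) ⁻¹' (BS t ς))ᶜ
      from by simp only [hE]] at *
    refine le_trans hb ?_
    have hcomb : ENNReal.ofReal (α t) * ENNReal.ofReal (1 - β t) + ENNReal.ofReal (1 - α t)
        = ENNReal.ofReal (1 - α t * β t) := by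
      rw [← ENNReal.ofReal_mul (hα0 t),
        ← ENNReal.ofReal_add (by nlinarith [hα0 t, hβ1 t]) (by linarith [hα1 t])]
      congr 1
      ring
    rw [hcomb, ← ENNReal.ofReal_pow (by nlinarith [hα0 t, hα1 t, hβ0 t, hβ1 t])]
    apply ENNReal.ofReal_le_ofReal
    -- real inequality
    have hq0 : 0 ≤ α t * β t := mul_nonneg (hα0 t) (hβ0 t)
    have hq1 : α t * β t ≤ 1 := by nlinarith [hα1 t, hβ1 t, hα0 t, hβ0 t]
    have hiq : L ≤ (α t * β t) * n := by
      have h16 : 16*(s:ℝ)^2/ε^2 * L ≤ n := Nat.le_ceil _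
      have heq : (ε'^2/16) * (16*(s:ℝ)^2/ε^2 * L) = L := by
        rw [hε'def]
        field_simp
      calc L = (ε'^2/16) * (16*(s:ℝ)^2/ε^2 * L) := heq.symm
        _ ≤ (α t * β t) * n :=
          mul_le_mul (hαβ t) h16 (by positivity) hq0
    calc (1 - α t * β t)^n ≤ (Real.exp (-(α t * β t)))^n := by
          apply pow_le_pow_left₀ (by linarith)
          linarith [Real.add_one_le_exp (-(α t * β t))]
      _ = Real.exp (-(α t * β t) * n) := by
          rw [← Real.exp_nat_mul]; ring_nf
      _ ≤ Real.exp (-L) := Real.exp_le_exp.2 (by linarith)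
      _ = δ/(2*s) := by
          rw [Real.exp_neg, hLdef, Real.exp_log (by positivity), inv_div]
  -- union bound
  have hGc : μ Gᶜ ≤ ENNReal.ofReal δ := by
    have hGceq : Gᶜ = ⋃ t ∈ T, ⋃ ς : Bool, ⋂ r : Fin n, (E t ς r)ᶜ := by
      simp only [hG, Set.compl_iInter, Set.compl_iUnion]
    rw [hGceq]
    calc μ (⋃ t ∈ T, ⋃ ς : Bool, ⋂ r : Fin n, (E t ς r)ᶜ)
        ≤ ∑ t ∈ T, μ (⋃ ς : Bool, ⋂ r : Fin n, (E t ς r)ᶜ) :=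
          measure_biUnion_finset_le _ _
      _ ≤ ∑ t ∈ T, ∑ ς : Bool, μ (⋂ r : Fin n, (E t ς r)ᶜ) := by
          refine Finset.sum_le_sum fun t _ => ?_
          refine le_of_le_of_eq (measure_iUnion_le _) ?_
          rw [tsum_fintype]
      _ ≤ ∑ t ∈ T, ∑ _ς : Bool, ENNReal.ofReal (δ/(2*s)) :=
          Finset.sum_le_sum fun t ht => Finset.sum_le_sum fun ς _ => main_bound t ht ς
      _ = (T.card * 2) • ENNReal.ofReal (δ/(2*s)) := by
          simp only [Finset.sum_const, Finset.card_univ, Fintype.card_bool]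
          rw [smul_smul]
      _ ≤ ENNReal.ofReal δ := by
          rw [nsmul_eq_mul]
          calc ((T.card * 2 : ℕ) : ENNReal) * ENNReal.ofReal (δ/(2*s))
              ≤ ((s * 2 : ℕ) : ENNReal) * ENNReal.ofReal (δ/(2*s)) := by
                apply mul_le_mul_left
                exact_mod_cast Nat.mul_le_mul_right 2 hTcard
            _ = ENNReal.ofReal δ := by
                rw [← ENNReal.ofReal_natCast, ← ENNReal.ofReal_mul (by positivity)]
                congr 1
                push_cast
                field_simp
  -- INCLUSION
  have hGsub : G ⊆ {ω : Ω | ∃ b : Fin k → Fin d → ℝ,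
      (∀ j t, b j t = 0 ∨ b j t = 1) ∧
      (∀ x : Fin d → ℝ, (∀ t, |x t| ≤ 1) →
        |(∑ j, u ω j * relu (∑ t, W j ω t * b j t * x t)) - ∑ t, wstar t * x t| ≤ ε) ∧
      (∑ j, l0 (b j)) ≤ 2 * s ∧ (∀ j, l0 (b j) ≤ 1)} := by
    intro ω hω
    simp only [hG, Set.mem_iInter, Set.mem_iUnion] at hω
    choose rsel hrsel using hω
    set Rj : Fin d → Bool → Fin k := fun t ς =>
      if h : t ∈ T then ii t (rsel t h ς) else ⟨0, hk0⟩ with hRj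
    have hRj_eq : ∀ t (ht : t ∈ T) (ς : Bool), Rj t ς = ii t (rsel t ht ς) := by
      intro t ht ς; simp only [hRj, dif_pos ht]
    have hRj_inj : ∀ t ∈ T, ∀ t' ∈ T, ∀ ς ς' : Bool, Rj t ς = Rj t' ς' → t = t' := by
      intro t ht t' ht' ς ς' h
      rw [hRj_eq t ht, hRj_eq t' ht'] at h
      exact hii_t t ht t' ht' _ _ h
    have hRdiff : ∀ t (_ : t ∈ T), Rj t true ≠ Rj t false := by
      intro t ht heq
      rw [hRj_eq t ht, hRj_eq t ht] at heq
      have hr := hii_r t heq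
      have h1 := (hrsel t ht true).1
      have h2 := (hrsel t ht false).1
      rw [hr] at h1
      have hA1 : AS t true = Set.Icc (Df t) (mf t) := by simp [hAS]
      have hA2 : AS t false = Set.Icc (-(mf t)) (-(Df t)) := by simp [hAS]
      rw [hA1] at h1
      rw [hA2] at h2
      have := h1.1
      have := h2.2
      simp only [Set.mem_preimage] at *
      linarith [hD0 t, h1.1, h2.2]
    set b : Fin k → Fin d → ℝ := fun j t' =>
      if t' ∈ T ∧ (j = Rj t' true ∨ j = Rj t' false) then 1 else 0 with hb
    have hb01 : ∀ j t', b j t' = 0 ∨ b j t' = 1 := by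
      intro j t'
      simp only [hb]
      split
      · exact Or.inr rfl
      · exact Or.inl rfl
    refine ⟨b, hb01, ?_, ?_, ?_⟩
    · -- approximation
      intro x hx
      have hF0 : ∀ j, (∀ t' ∈ T, j ≠ Rj t' true ∧ j ≠ Rj t' false) →
          u ω j * relu (∑ t', W j ω t' * b j t' * x t') = 0 := by
        intro j hj
        have hbj : ∀ t', b j t' = 0 := by
          intro t'
          simp only [hb]
          rw [if_neg]
          rintro ⟨ht', hor⟩
          rcases hor with h | h
          · exact (hj t' ht').1 h
          · exact (hj t' ht').2 h
        rw [Finset.sum_congr rfl (fun t' _ => by rw [hbj t', mul_zero, zero_mul]),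
          Finset.sum_const, smul_zero]
        simp [relu]
      set J : Finset (Fin k) := T.biUnion (fun t => {Rj t true, Rj t false}) with hJ
      have hsplit : (∑ j, u ω j * relu (∑ t', W j ω t' * b j t' * x t'))
          = ∑ t ∈ T, (u ω (Rj t true) * relu (∑ t', W (Rj t true) ω t' * b (Rj t true) t' * x t')
            + u ω (Rj t false) * relu (∑ t', W (Rj t false) ω t' * b (Rj t false) t' * x t')) := by
        rw [← Finset.sum_subset (Finset.subset_univ J) (fun j _ hj => hF0 j (by
          intro t' ht'
          constructor <;> intro heq <;> exact hj (Finset.mem_biUnion.2 ⟨t', ht', by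
            simp [heq]⟩)))]
        rw [hJ, Finset.sum_biUnion ?_]
        · exact Finset.sum_congr rfl fun t ht => Finset.sum_pair (hRdiff t ht)
        · intro t1 h1 t2 h2 hne
          dsimp only [Function.onFun]
          rw [Finset.disjoint_left]
          intro j hj1 hj2
          simp only [Finset.mem_insert, Finset.mem_singleton] at hj1 hj2
          apply hne
          rw [Finset.mem_coe] at h1 h2
          rcases hj1 with h | h <;> rcases hj2 with h' | h' <;>
            exact hRj_inj t1 h1 t2 h2 _ _ (h ▸ h')
      have hper : ∀ t ∈ T,
          |u ω (Rj t true) * relu (∑ t', W (Rj t true) ω t' * b (Rj t true) t' * x t')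
            + u ω (Rj t false) * relu (∑ t', W (Rj t false) ω t' * b (Rj t false) t' * x t')
            - wstar t * x t| ≤ ε' := by
        intro t ht
        have hinner : ∀ ς : Bool, (∑ t', W (Rj t ς) ω t' * b (Rj t ς) t' * x t')
            = W (Rj t ς) ω t * x t := by
          intro ς
          rw [Finset.sum_eq_single t]
          · have hb1 : b (Rj t ς) t = 1 := by
              simp only [hb]
              rw [if_pos ⟨ht, by cases ς; exacts [Or.inr rfl, Or.inl rfl]⟩]
            rw [hb1, mul_one]
          · intro t' _ hne
            have hb0 : b (Rj t ς) t' = 0 := by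
              simp only [hb]
              rw [if_neg]
              rintro ⟨ht', hor⟩
              refine hne ?_
              rcases hor with h | h
              · exact (hRj_inj t ht t' ht' ς true h).symm
              · exact (hRj_inj t ht t' ht' ς false h).symm
            rw [hb0, mul_zero, zero_mul]
          · intro h; exact absurd (Finset.mem_univ t) h
        rw [hinner true, hinner false]
        have hWp : W (Rj t true) ω t ∈ AS t true := by
          rw [hRj_eq t ht]; exact (hrsel t ht true).1
        have hWm : W (Rj t false) ω t ∈ AS t false := by
          rw [hRj_eq t ht]; exact (hrsel t ht false).1
        have hup : u ω (Rj t true) ∈ BS t true := by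
          rw [hRj_eq t ht]; exact (hrsel t ht true).2
        have hum : u ω (Rj t false) ∈ BS t false := by
          rw [hRj_eq t ht]; exact (hrsel t ht false).2
        have hA1 : AS t true = Set.Icc (max |wstar t| ε' * (1 - ε'/2)) (max |wstar t| ε') := by
          first | rfl | (simp only [hAS, if_true]; rw [hDf_eq, hmf])
        have hA2 : AS t false = Set.Icc (-(max |wstar t| ε')) (-(max |wstar t| ε' * (1 - ε'/2))) := by
          first | rfl | (simp only [hAS, if_false]; rw [hDf_eq, hmf])
        have hu1_eq : u1f t = (max |wstar t| ε' - ε')/(max |wstar t| ε' * (1 - ε'/2)) := by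
          first | rfl | rw [hu1f_eq, hDf_eq, hmf]
        refine coord_approx (wstar t) ε' (x t) _ _ _ _ hε'0 hε'1 (hwa1 t) (hx t)
          (hA1 ▸ hWp) (hA2 ▸ hWm) ?_ ?_
        · by_cases hsgn : 0 ≤ wstar t
          · rw [if_pos hsgn, ← hu1_eq]
            have : BS t true = Bp t := by simp only [hBS, if_pos hsgn]; rfl
            rw [this, hBp] at hup
            exact hup
          · rw [if_neg hsgn, ← hu1_eq]
            have : BS t true = Bm t := by simp only [hBS, if_neg hsgn]; rfl
            rw [this, hBm] at hup
            exact hup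
        · by_cases hsgn : 0 ≤ wstar t
          · rw [if_pos hsgn, ← hu1_eq]
            have : BS t false = Bm t := by simp only [hBS, if_pos hsgn]; rfl
            rw [this, hBm] at hum
            exact hum
          · rw [if_neg hsgn, ← hu1_eq]
            have : BS t false = Bp t := by simp only [hBS, if_neg hsgn]; rfl
            rw [this, hBp] at hum
            exact hum
      have hwsum2 : (∑ t, wstar t * x t) = ∑ t ∈ T, wstar t * x t := by
        rw [hTdef]
        exact (Finset.sum_filter_of_ne (fun t _ h => by
          intro h0; exact h (by rw [h0, zero_mul]))).symm
      rw [hsplit, hwsum2, ← Finset.sum_sub_distrib]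
      calc |∑ t ∈ T, (_ - wstar t * x t)|
          ≤ ∑ t ∈ T, |_ - wstar t * x t| := Finset.abs_sum_le_sum_abs _ _
        _ ≤ ∑ _t ∈ T, ε' := Finset.sum_le_sum hper
        _ = T.card • ε' := Finset.sum_const _
        _ ≤ (s:ℝ) * ε' := by
            rw [nsmul_eq_mul]
            apply mul_le_mul_of_nonneg_right _ hε'0.le
            exact_mod_cast hTcard
        _ = ε := by rw [hε'def]; field_simp
    · -- total sparsity
      have hform : ∀ j, l0 (b j)
          = ∑ t' : Fin d, if t' ∈ T ∧ (j = Rj t' true ∨ j = Rj t' false) then 1 else 0 := by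
        intro j
        show (Finset.univ.filter (fun t' => b j t' ≠ 0)).card = _
        rw [Finset.card_filter]
        refine Finset.sum_congr rfl fun t' _ => ?_
        by_cases hcond : t' ∈ T ∧ (j = Rj t' true ∨ j = Rj t' false)
        · simp only [hb, if_pos hcond]
          norm_num
        · simp only [hb, if_neg hcond]
          norm_num
      calc ∑ j, l0 (b j)
          = ∑ j, ∑ t' : Fin d, if t' ∈ T ∧ (j = Rj t' true ∨ j = Rj t' false) then 1 else 0 :=
            Finset.sum_congr rfl fun j _ => hform j
        _ = ∑ t' : Fin d, ∑ j, if t' ∈ T ∧ (j = Rj t' true ∨ j = Rj t' false) then 1 else 0 :=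
            Finset.sum_comm
        _ ≤ ∑ t' : Fin d, if t' ∈ T then 2 else 0 := by
            refine Finset.sum_le_sum fun t' _ => ?_
            by_cases ht' : t' ∈ T
            · rw [if_pos ht']
              have hsubset : Finset.univ.filter
                  (fun j => t' ∈ T ∧ (j = Rj t' true ∨ j = Rj t' false))
                  ⊆ {Rj t' true, Rj t' false} := by
                intro j hj
                rcases (Finset.mem_filter.1 hj).2.2 with h | h <;> simp [h]
              calc (∑ j, if t' ∈ T ∧ (j = Rj t' true ∨ j = Rj t' false) then 1 else 0)
                  = (Finset.univ.filter
                    (fun j => t' ∈ T ∧ (j = Rj t' true ∨ j = Rj t' false))).card := by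
                    rw [Finset.card_filter]
                _ ≤ ({Rj t' true, Rj t' false} : Finset (Fin k)).card :=
                    Finset.card_le_card hsubset
                _ ≤ 2 := by
                    apply le_trans (Finset.card_insert_le _ _)
                    simp
            · rw [if_neg ht']
              apply le_of_eq
              apply Finset.sum_eq_zero
              intro j _
              rw [if_neg]
              tauto
        _ = T.card * 2 := by
            rw [Finset.sum_ite_mem, Finset.univ_inter, Finset.sum_const, smul_eq_mul,
              mul_comm]
        _ ≤ 2 * s := by omega
    · -- per-neuron sparsity
      intro j
      show (Finset.univ.filter (fun t' => b j t' ≠ 0)).card ≤ 1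
      rw [Finset.card_le_one]
      intro t1 h1 t2 h2
      have hc1 : t1 ∈ T ∧ (j = Rj t1 true ∨ j = Rj t1 false) := by
        by_contra hc
        have := (Finset.mem_filter.1 h1).2
        simp only [hb, if_neg hc] at this
        exact this rfl
      have hc2 : t2 ∈ T ∧ (j = Rj t2 true ∨ j = Rj t2 false) := by
        by_contra hc
        have := (Finset.mem_filter.1 h2).2
        simp only [hb, if_neg hc] at this
        exact this rfl
      rcases hc1.2 with h | h <;> rcases hc2.2 with h' | h' <;>
        exact hRj_inj t1 hc1.1 t2 hc2.1 _ _ (h ▸ h')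
  -- CONCLUSION
  have h1 : (1:ENNReal) ≤ μ G + μ Gᶜ := by
    calc (1:ENNReal) = μ Set.univ := measure_univ.symm
      _ = μ (G ∪ Gᶜ) := by rw [Set.union_compl_self]
      _ ≤ μ G + μ Gᶜ := measure_union_le _ _
  have hfinal : ENNReal.ofReal (1 - δ) ≤ μ G := by
    rw [ENNReal.ofReal_sub _ hδ.le, ENNReal.ofReal_one]
    refine tsub_le_iff_right.2 ?_
    exact h1.trans (add_le_add_right hGc _)
  exact hfinal.trans (measure_mono hGsub)
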